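/- Let I and K be admissible ideals on ℕ such that I satisfies the condition (AP). Then for every sequence (x_n) in a normed linear space and every r ≥ 0, the rough I-limit set of degree r is contained in the rough I^K-limit set of degree r. -/

import Mathlib

/-- `I` is an ideal of subsets of ℕ: closed under finite unions and subsets. -/
def IsIdeal (I : Set (Set ℕ)) : Prop :=
  (∀ A B : Set ℕ, A ∈ I → B ∈ I → A ∪ B ∈ I) ∧
  (∀ A B : Set ℕ, A ∈ I → B ⊆ A → B ∈ I)

/-- A nontrivial admissible ideal: an ideal containing all singletons, with ℕ ∉ I. -/
def IsAdmissibleIdeal (I : Set (Set ℕ)) : Prop :=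
  IsIdeal I ∧ (∀ n : ℕ, ({n} : Set ℕ) ∈ I) ∧ (Set.univ : Set ℕ) ∉ I

/-- The subsequence of `x` over `M` rough converges to `l` of degree `r`:
for each ε > 0, ‖x m − l‖ < r + ε for all but finitely many m ∈ M. -/
def RoughConvAlong {X : Type*} [NormedAddCommGroup X]
    (M : Set ℕ) (x : ℕ → X) (r : ℝ) (l : X) : Prop :=
  ∀ ε > (0:ℝ), {m ∈ M | r + ε ≤ ‖x m - l‖}.Finite

/-- Rough I-convergence of degree r to l. -/
def RoughIConv (I : Set (Set ℕ)) {X : Type*} [NormedAddCommGroup X]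
    (x : ℕ → X) (r : ℝ) (l : X) : Prop :=
  ∀ ε > (0:ℝ), {n : ℕ | r + ε ≤ ‖x n - l‖} ∈ I

/-- Rough I*-convergence of degree r to l. -/
def RoughIStarConv (I : Set (Set ℕ)) {X : Type*} [NormedAddCommGroup X]
    (x : ℕ → X) (r : ℝ) (l : X) : Prop :=
  ∃ M : Set ℕ, Mᶜ ∈ I ∧ RoughConvAlong M x r l

/-- The trace ideal K|M = {A ∩ M : A ∈ K}. -/
def traceIdeal (K : Set (Set ℕ)) (M : Set ℕ) : Set (Set ℕ) :=
  {A | ∃ B ∈ K, A = B ∩ M}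

/-- Rough I^K-convergence of degree r to l: there is M with Mᶜ ∈ I such that the
set of indices of the subsequence over M lying outside the (r+ε)-ball belongs to K|M. -/
def RoughIKConv (I K : Set (Set ℕ)) {X : Type*} [NormedAddCommGroup X]
    (x : ℕ → X) (r : ℝ) (l : X) : Prop :=
  ∃ M : Set ℕ, Mᶜ ∈ I ∧
    ∀ ε > (0:ℝ), {m ∈ M | r + ε ≤ ‖x m - l‖} ∈ traceIdeal K M

/-- The condition (AP) for an ideal I. -/
def APcond (I : Set (Set ℕ)) : Prop :=
  ∀ A : ℕ → Set ℕ, (∀ j, A j ∈ I) → (Pairwise (Function.onFun Disjoint A)) →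
    ∃ B : ℕ → Set ℕ, (∀ j, B j ∈ I) ∧ (∀ j, (symmDiff (A j) (B j)).Finite) ∧
      (⋃ j, B j) ∈ I

/-- The condition AP(I,K). -/
def APIK (I K : Set (Set ℕ)) : Prop :=
  ∀ A : ℕ → Set ℕ, (∀ j, A j ∈ I) → (Pairwise (Function.onFun Disjoint A)) →
    ∃ B : ℕ → Set ℕ, (∀ j, B j ∈ I) ∧ (∀ j, symmDiff (A j) (B j) ∈ K) ∧
      (⋃ j, B j) ∈ I


lemma finite_mem_of_admissible {K : Set (Set ℕ)} (hK : IsAdmissibleIdeal K)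
    {S : Set ℕ} (hS : S.Finite) : S ∈ K := by
  refine Set.Finite.induction_on (motive := fun s _ => s ∈ K) S hS (hK.1.2 {0} ∅ (hK.2.1 0) (Set.empty_subset _)) ?_
  intro a s _ _ ih
  rw [Set.insert_eq]
  exact hK.1.1 _ _ (hK.2.1 a) ih

theorem stmt7 {X : Type*} [NormedAddCommGroup X] [NormedSpace ℝ X]
    (I K : Set (Set ℕ)) (hI : IsAdmissibleIdeal I) (hK : IsAdmissibleIdeal K)
    (hAP : APcond I)
    (x : ℕ → X) (r : ℝ) (hr : 0 ≤ r) :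
    {l : X | RoughIConv I x r l} ⊆ {l : X | RoughIKConv I K x r l} := by
  intro l hl
  simp only [Set.mem_setOf_eq] at hl ⊢
  set C : ℕ → Set ℕ := fun j => {n | r + 1/(j+1) ≤ ‖x n - l‖} with hCdef
  have hCmono : Monotone C := by
    intro i j hij n hn
    simp only [hCdef, Set.mem_setOf_eq] at hn ⊢
    refine le_trans (add_le_add_right ?_ r) hn
    apply one_div_le_one_div_of_le
    · positivity
    · have : (i:ℝ) ≤ j := Nat.cast_le.mpr hij
      linarith
  have hCI : ∀ j, C j ∈ I := fun j => hl _ (by positivity)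
  set A := disjointed C with hA
  have hAI : ∀ j, A j ∈ I := fun j => hI.1.2 _ _ (hCI j) (disjointed_subset C j)
  obtain ⟨B, hBI, hfin, hU⟩ := hAP A hAI (disjoint_disjointed C)
  refine ⟨(⋃ j, B j)ᶜ, by rwa [compl_compl], ?_⟩
  intro ε hε
  obtain ⟨j, hj⟩ := exists_nat_one_div_lt hε
  set S : Set ℕ := {m ∈ (⋃ j, B j)ᶜ | r + ε ≤ ‖x m - l‖} with hSdef
  have hsub : S ⊆ ⋃ i ∈ Finset.range (j+1), symmDiff (A i) (B i) := by
    rintro m ⟨hmM, hmε⟩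
    have hmC : m ∈ C j := by
      simp only [hCdef, Set.mem_setOf_eq]
      exact le_trans (add_le_add_right hj.le r) hmε
    have hmem : m ∈ ⨆ i, ⨆ _ : i ≤ j, A i := by
      rw [← partialSups_eq_biSup, hA, partialSups_disjointed, hCmono.partialSups_eq]
      exact hmC
    obtain ⟨i, hi, hmA⟩ := Set.mem_iUnion₂.mp hmem
    have hmB : m ∉ B i := fun h => hmM (Set.mem_iUnion.mpr ⟨i, h⟩)
    refine Set.mem_biUnion (Finset.mem_range.mpr (Nat.lt_succ_of_le hi)) ?_
    rw [Set.mem_symmDiff]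
    exact Or.inl ⟨hmA, hmB⟩
  have hSfin : S.Finite :=
    (Set.Finite.biUnion (Finset.range (j+1)).finite_toSet (fun i _ => hfin i)).subset hsub
  refine ⟨S, finite_mem_of_admissible hK hSfin, ?_⟩
  exact (Set.inter_eq_self_of_subset_left fun m hm => hm.1).symm
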